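/- Let k be a field of characteristic ≠ 2, let a, b, c ∈ k be nonzero with ac = b², and let D = Δ·δ be the Nagata derivation of k[X,Y,Z]. Then D∘L_{(a,b,c)} = L_{(a,b,c)}∘((bc)^{−1}·D) as k-linear maps of k[X,Y,Z]; equivalently, L_{(a,b,c)}^{−1}∘D∘L_{(a,b,c)} = (bc)^{−1}·D. -/

import Mathlib

open MvPolynomial

/-- Over a field of characteristic `≠ 2`, for nonzero `a,b,c` with `ac = b²`, the Nagata
derivation `D` satisfies `D ∘ L_{(a,b,c)} = L_{(a,b,c)} ∘ ((bc)⁻¹ • D)`, equivalently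
`L⁻¹ ∘ D ∘ L = (bc)⁻¹ • D`. -/
theorem nagata_stmt_8 (k : Type*) [Field k] (h2 : (2 : k) ≠ 0)
    (a b c : k) (ha : a ≠ 0) (hb : b ≠ 0) (hc : c ≠ 0) (habc : a * c = b ^ 2)
    (Δ : MvPolynomial (Fin 3) k) (hΔ : Δ = X 0 * X 2 + X 1 ^ 2)
    (D : Derivation k (MvPolynomial (Fin 3) k) (MvPolynomial (Fin 3) k))
    (hDX : D (X 0) = -(2 * X 1 * Δ))
    (hDY : D (X 1) = X 2 * Δ)
    (hDZ : D (X 2) = 0)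
    (L : MvPolynomial (Fin 3) k ≃ₐ[k] MvPolynomial (Fin 3) k)
    (hLX : L (X 0) = a • X 0) (hLY : L (X 1) = b • X 1) (hLZ : L (X 2) = c • X 2) :
    (∀ p : MvPolynomial (Fin 3) k, D (L p) = L ((b * c)⁻¹ • D p)) ∧
    (∀ p : MvPolynomial (Fin 3) k, L.symm (D (L p)) = (b * c)⁻¹ • D p) := by
  have hLΔ : L Δ = C (b ^ 2) * Δ := by
    have hCac : (C a * C c : MvPolynomial (Fin 3) k) = C (b ^ 2) := by
      rw [← map_mul, habc]
    have hCb : (C b * C b : MvPolynomial (Fin 3) k) = C (b ^ 2) := by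
      rw [← map_mul, ← pow_two]
    rw [hΔ, map_add, map_mul, map_pow, hLX, hLY, hLZ]
    simp only [smul_eq_C_mul]
    linear_combination X 0 * X 2 * hCac + X 1 ^ 2 * hCb
  have hXc : ∀ i : Fin 3, D (L (X i)) = L ((b * c)⁻¹ • D (X i)) := by
    intro i
    have h0 : (b * c)⁻¹ * (b * b ^ 2) = a := by
      field_simp
      linear_combination -habc
    have h1 : (b * c)⁻¹ * (c * b ^ 2) = b := by
      field_simp
    fin_cases i
    · show D (L (X 0)) = L ((b * c)⁻¹ • D (X 0))
      have hC : (C ((b * c)⁻¹) * (C b * C (b ^ 2)) : MvPolynomial (Fin 3) k) = C a := by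
        rw [← map_mul, ← map_mul, h0]
      rw [hLX, Derivation.map_smul, hDX, map_smul, map_neg, map_mul, map_mul, map_ofNat,
        hLY, hLΔ]
      simp only [smul_eq_C_mul]
      linear_combination (2 * X 1 * Δ) * hC
    · show D (L (X 1)) = L ((b * c)⁻¹ • D (X 1))
      have hC : (C ((b * c)⁻¹) * (C c * C (b ^ 2)) : MvPolynomial (Fin 3) k) = C b := by
        rw [← map_mul, ← map_mul, h1]
      rw [hLY, Derivation.map_smul, hDY, map_smul, map_mul, hLZ, hLΔ]
      simp only [smul_eq_C_mul]
      linear_combination (-(X 2 * Δ)) * hC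
    · show D (L (X 2)) = L ((b * c)⁻¹ • D (X 2))
      rw [hLZ, Derivation.map_smul, hDZ]
      simp
  have key : ∀ p : MvPolynomial (Fin 3) k, D (L p) = L ((b * c)⁻¹ • D p) := by
    intro p
    induction p using MvPolynomial.induction_on with
    | C r =>
      rw [show (C r : MvPolynomial (Fin 3) k) = algebraMap k _ r from rfl,
        AlgEquiv.commutes, Derivation.map_algebraMap]
      simp
    | add p q hp hq => simp [map_add, smul_add, hp, hq]
    | mul_X p i hp =>
      rw [map_mul, Derivation.leibniz, Derivation.leibniz, hp, hXc i]
      simp only [smul_eq_mul, smul_add, map_add, map_mul, map_smul, mul_smul_comm,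
        smul_mul_assoc]
  exact ⟨key, fun p => by rw [key p, AlgEquiv.symm_apply_apply]⟩
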